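/- arXiv:1303.5845 — 4 statements merged into one kernel-verified Lean document; each statement's English description precedes it below -/
import Mathlib

section
/- Let γ > 0 and let l be a positive integer with 2l > γ + m. Then there exists a constant C > 0, depending only on m (i.e., on a and b), γ and l, such that for every integer μ ≥ 2 one has ∫_0^π (1/k_{μ,l}) D_{μ,l}(t) t^γ α(t) dt ≤ C / μ^γ. -/
open MeasureTheory Real

private lemma abs_sin_nat_mul_le' (n : ℕ) (x : ℝ) : |Real.sin (n * x)| ≤ n * |Real.sin x| := by
  induction n with
  | zero => simp
  | succ k ih =>
    have h : ((k:ℝ)+1) * x = k*x + x := by ring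
    rw [Nat.cast_succ, h, Real.sin_add]
    calc |Real.sin (k*x) * Real.cos x + Real.cos (k*x) * Real.sin x|
        ≤ |Real.sin (k*x) * Real.cos x| + |Real.cos (k*x) * Real.sin x| := abs_add_le _ _
      _ ≤ |Real.sin (k*x)| * 1 + 1 * |Real.sin x| := by
          rw [abs_mul, abs_mul]
          gcongr <;> first | exact Real.abs_cos_le_one _ | exact abs_nonneg _
      _ ≤ k * |Real.sin x| + 1 * |Real.sin x| := by rw [mul_one]; gcongr
      _ = ((k:ℝ)+1) * |Real.sin x| := by ring

set_option maxHeartbeats 2000000 in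
/-- Let `γ > 0` and `l ≥ 1` with `2l > γ + m`, where `m = a + b + 1`.
Then there is a constant `C > 0` (depending only on `a`, `b`, `γ`, `l`) such that
for every integer `μ ≥ 2`,
`∫_0^π (1/k_{μ,l}) D_{μ,l}(t) t^γ α(t) dt ≤ C / μ^γ`, where
`α(t) = sin(t/2)^a (sin t)^b`, `D_{μ,l}(t) = (sin(μt/2)/sin(t/2))^(2l)` and
`k_{μ,l} = ∫_0^π D_{μ,l}(t) α(t) dt`. -/
theorem stmt_0 (a b : ℕ) (m : ℕ) (hm : m = a + b + 1)
    (γ : ℝ) (hγ : 0 < γ) (l : ℕ) (hl : 1 ≤ l)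
    (h2l : γ + (m : ℝ) < 2 * l) :
    ∃ C : ℝ, 0 < C ∧ ∀ μ : ℕ, 2 ≤ μ →
      (∫ t in Set.Ioo (0 : ℝ) π,
          (1 / ∫ s in Set.Ioo (0 : ℝ) π,
              (Real.sin (μ * s / 2) / Real.sin (s / 2)) ^ (2 * l) *
                ((Real.sin (s / 2)) ^ a * (Real.sin s) ^ b)) *
            ((Real.sin (μ * t / 2) / Real.sin (t / 2)) ^ (2 * l) *
              (t ^ γ * ((Real.sin (t / 2)) ^ a * (Real.sin t) ^ b))))
        ≤ C / (μ : ℝ) ^ γ := by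
  have hπ := Real.pi_gt_three
  have hπ0 : (0:ℝ) < π := by linarith
  -- real constants
  set e : ℝ := γ + (a + b + 1 : ℕ) with he_def
  have he0 : 0 < e := by positivity
  have he2l : e < 2 * l := by rw [he_def, ← hm]; exact h2l
  set A : ℝ := 1 / e + π ^ (2*l) / (2 * l - e) with hA_def
  have hA0 : 0 < A := by
    have h1 : 0 < (2:ℝ) * l - e := by linarith
    positivity
  set cK : ℝ := (2 / π) ^ (2*l) / (π ^ (a + b) * (a + b + 1 : ℕ)) with hcK_def
  have hcK0 : 0 < cK := by positivity
  refine ⟨A / cK, by positivity, ?_⟩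
  intro μ hμ
  have hx2 : (2:ℝ) ≤ (μ:ℝ) := by exact_mod_cast hμ
  have hx0 : (0:ℝ) < (μ:ℝ) := by linarith
  set r : ℝ := ((μ:ℝ))⁻¹ with hr_def
  have hr0 : 0 < r := by positivity
  have hrh : r ≤ 1/2 := by
    rw [hr_def]
    rw [inv_le_comm₀ (by linarith) (by norm_num)]
    simpa using hx2
  have hrπ : r < π := by linarith
  -- the functions
  set f : ℝ → ℝ := fun s => (Real.sin (μ * s / 2) / Real.sin (s / 2)) ^ (2 * l) *
                ((Real.sin (s / 2)) ^ a * (Real.sin s) ^ b) with hf_def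
  set g : ℝ → ℝ := fun t => (Real.sin (μ * t / 2) / Real.sin (t / 2)) ^ (2 * l) *
              (t ^ γ * ((Real.sin (t / 2)) ^ a * (Real.sin t) ^ b)) with hg_def
  set k : ℝ := ∫ s in Set.Ioo (0:ℝ) π, f s with hk_def
  -- basic pointwise facts on (0, π)
  have hsin_half_pos : ∀ t ∈ Set.Ioo (0:ℝ) π, 0 < Real.sin (t/2) := by
    intro t ht
    exact Real.sin_pos_of_pos_of_lt_pi (by linarith [ht.1]) (by linarith [ht.2])
  have hsin_pos : ∀ t ∈ Set.Ioo (0:ℝ) π, 0 < Real.sin t := fun t ht =>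
    Real.sin_pos_of_pos_of_lt_pi ht.1 ht.2
  have halpha_le_one : ∀ t ∈ Set.Ioo (0:ℝ) π,
      (Real.sin (t / 2)) ^ a * (Real.sin t) ^ b ≤ 1 := by
    intro t ht
    have h1 : Real.sin (t/2) ≤ 1 := Real.sin_le_one _
    have h2 : Real.sin t ≤ 1 := Real.sin_le_one _
    have h3 := (hsin_half_pos t ht).le
    have h4 := (hsin_pos t ht).le
    calc (Real.sin (t / 2)) ^ a * (Real.sin t) ^ b ≤ 1 ^ a * 1 ^ b := by
          apply mul_le_mul (pow_le_pow_left₀ h3 h1 a) (pow_le_pow_left₀ h4 h2 b)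
            (by positivity) (by norm_num)
      _ = 1 := by norm_num
  have halpha_nonneg : ∀ t ∈ Set.Ioo (0:ℝ) π,
      0 ≤ (Real.sin (t / 2)) ^ a * (Real.sin t) ^ b := by
    intro t ht
    have := hsin_half_pos t ht
    have := hsin_pos t ht
    positivity
  -- the Dirichlet-type ratio bounds
  have hD_nonneg : ∀ t : ℝ, 0 ≤ (Real.sin (μ * t / 2) / Real.sin (t / 2)) ^ (2 * l) := by
    intro t
    rw [show 2*l = l*2 by ring, pow_mul]
    positivity
  have hD_le_mu : ∀ t ∈ Set.Ioo (0:ℝ) π,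
      (Real.sin (μ * t / 2) / Real.sin (t / 2)) ^ (2 * l) ≤ (μ:ℝ) ^ (2 * l) := by
    intro t ht
    have hs := hsin_half_pos t ht
    have h1 : |Real.sin (μ * t / 2)| ≤ (μ:ℝ) * Real.sin (t/2) := by
      have h := abs_sin_nat_mul_le' μ (t/2)
      rwa [abs_of_pos hs, show (μ:ℝ)*(t/2) = μ*t/2 by ring] at h
    have heven : Even (2*l) := ⟨l, by ring⟩
    rw [← Even.pow_abs heven]
    apply pow_le_pow_left₀ (abs_nonneg _)
    rw [abs_div, abs_of_pos hs, div_le_iff₀ hs]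
    exact h1
  have hD_le_t : ∀ t ∈ Set.Ioo (0:ℝ) π,
      (Real.sin (μ * t / 2) / Real.sin (t / 2)) ^ (2 * l) ≤ (π / t) ^ (2 * l) := by
    intro t ht
    have hs := hsin_half_pos t ht
    have hlow : t / π ≤ Real.sin (t/2) := by
      have := Real.mul_le_sin (x := t/2) (by linarith [ht.1]) (by linarith [ht.2])
      calc t / π = 2 / π * (t/2) := by field_simp
        _ ≤ Real.sin (t/2) := this
    have heven : Even (2*l) := ⟨l, by ring⟩
    rw [← Even.pow_abs heven]
    apply pow_le_pow_left₀ (abs_nonneg _)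
    rw [abs_div, abs_of_pos hs]
    calc |Real.sin (μ * t / 2)| / Real.sin (t/2) ≤ 1 / (t / π) := by
          apply div_le_div₀ (by norm_num) (Real.abs_sin_le_one _) (div_pos ht.1 hπ0) hlow
      _ = π / t := one_div_div _ _
  -- lower bounds on (0, r)
  have hD_ge : ∀ t ∈ Set.Ioo (0:ℝ) r,
      (2 * (μ:ℝ) / π) ^ (2 * l) ≤ (Real.sin (μ * t / 2) / Real.sin (t / 2)) ^ (2 * l) := by
    intro t ht
    have ht0 : 0 < t := ht.1
    have htr : t < r := ht.2
    have htπ : t ∈ Set.Ioo (0:ℝ) π := ⟨ht0, lt_trans htr hrπ⟩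
    have hs := hsin_half_pos t htπ
    have hxt1 : (μ:ℝ) * t < 1 := by
      have h := (mul_lt_mul_iff_right₀ hx0).mpr htr
      rwa [hr_def, mul_inv_cancel₀ (ne_of_gt hx0)] at h
    have hmt : (μ:ℝ) * t / 2 ≤ π / 2 := by linarith
    have hsin_mu : (μ:ℝ) * t / π ≤ Real.sin ((μ:ℝ) * t / 2) := by
      have h := Real.mul_le_sin (x := (μ:ℝ) * t / 2) (by positivity) hmt
      calc (μ:ℝ) * t / π = 2 / π * ((μ:ℝ) * t / 2) := by field_simp
        _ ≤ _ := h
    have hsin_half_le : Real.sin (t/2) ≤ t/2 := Real.sin_le (by linarith)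
    apply pow_le_pow_left₀ (by positivity)
    calc 2 * (μ:ℝ) / π = ((μ:ℝ) * t / π) / (t / 2) := by field_simp
      _ ≤ Real.sin ((μ:ℝ) * t / 2) / Real.sin (t / 2) :=
          div_le_div₀ (le_trans (by positivity) hsin_mu) hsin_mu hs hsin_half_le
  have halpha_ge : ∀ t ∈ Set.Ioo (0:ℝ) r,
      (t / π) ^ (a + b) ≤ (Real.sin (t / 2)) ^ a * (Real.sin t) ^ b := by
    intro t ht
    have ht0 : 0 < t := ht.1
    have htr : t < r := ht.2
    have h1 : t / π ≤ Real.sin (t / 2) := by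
      have h := Real.mul_le_sin (x := t/2) (by linarith) (by linarith)
      calc t / π = 2 / π * (t/2) := by field_simp
        _ ≤ _ := h
    have h2 : t / π ≤ Real.sin t := by
      have h := Real.mul_le_sin (x := t) (by linarith) (by linarith)
      have hπi : (0:ℝ) < π⁻¹ := by positivity
      have : t / π ≤ 2 / π * t := by
        rw [div_eq_mul_inv, div_eq_mul_inv]
        nlinarith [mul_nonneg ht0.le hπi.le]
      linarith
    have hta : (0:ℝ) ≤ t / π := by positivity
    calc (t / π) ^ (a + b) = (t/π)^a * (t/π)^b := pow_add _ a b
      _ ≤ (Real.sin (t / 2)) ^ a * (Real.sin t) ^ b :=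
          mul_le_mul (pow_le_pow_left₀ hta h1 a) (pow_le_pow_left₀ hta h2 b)
            (by positivity) (pow_nonneg (le_trans hta h1) a)
  -- integrability
  have hIoo_fin : volume (Set.Ioo (0:ℝ) π) ≠ ⊤ := by
    rw [Real.volume_Ioo]; exact ENNReal.ofReal_ne_top
  have hf_meas : Measurable f := by rw [hf_def]; fun_prop
  have hg_meas : Measurable g := by rw [hg_def]; fun_prop
  have hf_int : IntegrableOn f (Set.Ioo (0:ℝ) π) := by
    apply Measure.integrableOn_of_bounded hIoo_fin hf_meas.aestronglyMeasurable
      (M := (μ:ℝ) ^ (2*l))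
    filter_upwards [ae_restrict_mem measurableSet_Ioo] with t ht
    rw [Real.norm_eq_abs, abs_of_nonneg (mul_nonneg (hD_nonneg t) (halpha_nonneg t ht))]
    calc f t ≤ (μ:ℝ) ^ (2*l) * 1 :=
          mul_le_mul (hD_le_mu t ht) (halpha_le_one t ht) (halpha_nonneg t ht) (by positivity)
      _ = (μ:ℝ) ^ (2*l) := mul_one _
  have hg_nonneg : ∀ t ∈ Set.Ioo (0:ℝ) π, 0 ≤ g t := by
    intro t ht
    have h1 := hD_nonneg t
    have h2 := halpha_nonneg t ht
    have h3 : (0:ℝ) ≤ t ^ γ := Real.rpow_nonneg ht.1.le γ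
    rw [hg_def]
    positivity
  have hg_int : IntegrableOn g (Set.Ioo (0:ℝ) π) := by
    apply Measure.integrableOn_of_bounded hIoo_fin hg_meas.aestronglyMeasurable
      (M := (μ:ℝ) ^ (2*l) * π ^ γ)
    filter_upwards [ae_restrict_mem measurableSet_Ioo] with t ht
    rw [Real.norm_eq_abs, abs_of_nonneg (hg_nonneg t ht)]
    rw [hg_def]
    have h3 : t ^ γ ≤ π ^ γ := Real.rpow_le_rpow ht.1.le ht.2.le hγ.le
    calc (Real.sin (μ * t / 2) / Real.sin (t / 2)) ^ (2 * l) *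
          (t ^ γ * ((Real.sin (t / 2)) ^ a * (Real.sin t) ^ b))
        ≤ (μ:ℝ) ^ (2*l) * (π ^ γ * 1) := by
          apply mul_le_mul (hD_le_mu t ht) _ _ (by positivity)
          · apply mul_le_mul h3 (halpha_le_one t ht) (halpha_nonneg t ht)
              (Real.rpow_nonneg hπ0.le γ)
          · exact mul_nonneg (Real.rpow_nonneg ht.1.le γ) (halpha_nonneg t ht)
      _ = (μ:ℝ) ^ (2*l) * π ^ γ := by rw [mul_one]
  rw [MeasureTheory.integral_const_mul]
  show 1 / k * ∫ t in Set.Ioo (0:ℝ) π, g t ≤ A / cK / (μ:ℝ) ^ γ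
  -- abbreviations for exponents
  set c1 : ℝ := γ + ((a+b:ℕ):ℝ) with hc1_def
  have hc1e : c1 + 1 = e := by rw [hc1_def, he_def]; push_cast; ring
  have hc1pos : 0 < c1 := by positivity
  set s2 : ℝ := γ + ((a+b:ℕ):ℝ) - ((2*l:ℕ):ℝ) with hs2_def
  have hs2e : s2 + 1 = e - 2*(l:ℝ) := by rw [hs2_def, he_def]; push_cast; ring
  have hs2neg : s2 + 1 < 0 := by rw [hs2e]; linarith
  -- splitting the integral
  have hsub1 : Set.Ioo (0:ℝ) r ⊆ Set.Ioo (0:ℝ) π := by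
    intro t ht; exact ⟨ht.1, lt_trans ht.2 hrπ⟩
  have hsub2 : Set.Ico r π ⊆ Set.Ioo (0:ℝ) π := by
    intro t ht; exact ⟨lt_of_lt_of_le hr0 ht.1, ht.2⟩
  have hsub3 : Set.Ioo r π ⊆ Set.Ioo (0:ℝ) π := by
    intro t ht; exact ⟨lt_trans hr0 ht.1, ht.2⟩
  have hg1 : IntegrableOn g (Set.Ioo (0:ℝ) r) := hg_int.mono_set hsub1
  have hg2 : IntegrableOn g (Set.Ico r π) := hg_int.mono_set hsub2
  have hsplit : (∫ t in Set.Ioo (0:ℝ) π, g t)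
      = (∫ t in Set.Ioo (0:ℝ) r, g t) + ∫ t in Set.Ico r π, g t := by
    rw [← Set.Ioo_union_Ico_eq_Ioo hr0 hrπ.le]
    apply setIntegral_union
    · exact (Set.Iio_disjoint_Ici (le_refl r)).mono Set.Ioo_subset_Iio_self
        Set.Ico_subset_Ici_self
    · exact measurableSet_Ico
    · exact hg1
    · exact hg2
  -- piece 1
  have hα_le_pow : ∀ t ∈ Set.Ioo (0:ℝ) π,
      (Real.sin (t / 2)) ^ a * (Real.sin t) ^ b ≤ t ^ (a + b) := by
    intro t ht
    have h1 : Real.sin (t/2) ≤ t := le_trans (Real.sin_le (by linarith [ht.1])) (by linarith [ht.1])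
    have h2 : Real.sin t ≤ t := Real.sin_le ht.1.le
    calc (Real.sin (t / 2)) ^ a * (Real.sin t) ^ b ≤ t ^ a * t ^ b :=
          mul_le_mul (pow_le_pow_left₀ (hsin_half_pos t ht).le h1 a)
            (pow_le_pow_left₀ (hsin_pos t ht).le h2 b)
            (pow_nonneg (hsin_pos t ht).le b) (pow_nonneg ht.1.le a)
      _ = t ^ (a + b) := (pow_add t a b).symm
  have hmaj1_int : IntegrableOn (fun t => (μ:ℝ)^(2*l) * t ^ c1) (Set.Ioo (0:ℝ) r) := by
    apply Measure.integrableOn_of_bounded (by rw [Real.volume_Ioo]; exact ENNReal.ofReal_ne_top)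
      (by fun_prop : Measurable fun t : ℝ => (μ:ℝ)^(2*l) * t ^ c1).aestronglyMeasurable
      (M := (μ:ℝ)^(2*l) * r ^ c1)
    filter_upwards [ae_restrict_mem measurableSet_Ioo] with t ht
    rw [Real.norm_eq_abs, abs_of_nonneg
      (mul_nonneg (by positivity) (Real.rpow_nonneg ht.1.le c1))]
    exact mul_le_mul_of_nonneg_left
      (Real.rpow_le_rpow ht.1.le ht.2.le hc1pos.le) (by positivity)
  have hP1 : (∫ t in Set.Ioo (0:ℝ) r, g t) ≤ (μ:ℝ)^(2*l) * (r ^ e / e) := by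
    have hmono : ∀ t ∈ Set.Ioo (0:ℝ) r, g t ≤ (μ:ℝ)^(2*l) * t ^ c1 := by
      intro t ht
      have htπ := hsub1 ht
      have htγ : (0:ℝ) ≤ t ^ γ := Real.rpow_nonneg ht.1.le γ
      have : g t ≤ (μ:ℝ)^(2*l) * (t ^ γ * t ^ (a+b)) := by
        rw [hg_def]
        apply mul_le_mul (hD_le_mu t htπ)
          (mul_le_mul_of_nonneg_left (hα_le_pow t htπ) htγ)
          (mul_nonneg htγ (halpha_nonneg t htπ)) (by positivity)
      refine le_trans this (le_of_eq ?_)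
      congr 1
      rw [← Real.rpow_natCast t (a+b), ← Real.rpow_add ht.1, hc1_def]
    calc (∫ t in Set.Ioo (0:ℝ) r, g t)
        ≤ ∫ t in Set.Ioo (0:ℝ) r, (μ:ℝ)^(2*l) * t ^ c1 :=
          setIntegral_mono_on hg1 hmaj1_int measurableSet_Ioo hmono
      _ = (μ:ℝ)^(2*l) * ∫ t in Set.Ioo (0:ℝ) r, t ^ c1 := by
          rw [MeasureTheory.integral_const_mul]
      _ = (μ:ℝ)^(2*l) * (r ^ e / e) := by
          congr 1
          rw [← MeasureTheory.integral_Ioc_eq_integral_Ioo,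
            ← intervalIntegral.integral_of_le hr0.le,
            integral_rpow (Or.inl (by linarith))]
          rw [Real.zero_rpow (by linarith : c1 + 1 ≠ 0), hc1e]
          ring
  -- piece 2
  have hmaj2_int : IntegrableOn (fun t => π^(2*l) * t ^ s2) (Set.Ioo r π) := by
    apply Measure.integrableOn_of_bounded (by rw [Real.volume_Ioo]; exact ENNReal.ofReal_ne_top)
      (by fun_prop : Measurable fun t : ℝ => π^(2*l) * t ^ s2).aestronglyMeasurable
      (M := π^(2*l) * r ^ s2)
    filter_upwards [ae_restrict_mem measurableSet_Ioo] with t ht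
    have ht0 : 0 < t := lt_trans hr0 ht.1
    rw [Real.norm_eq_abs, abs_of_nonneg
      (mul_nonneg (by positivity) (Real.rpow_nonneg ht0.le s2))]
    exact mul_le_mul_of_nonneg_left
      (Real.rpow_le_rpow_of_nonpos hr0 ht.1.le (by linarith)) (by positivity)
  have hP2 : (∫ t in Set.Ico r π, g t) ≤ π^(2*l) * (r ^ (e - 2*(l:ℝ)) / (2*(l:ℝ) - e)) := by
    rw [MeasureTheory.integral_Ico_eq_integral_Ioo]
    have hmono : ∀ t ∈ Set.Ioo r π, g t ≤ π^(2*l) * t ^ s2 := by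
      intro t ht
      have htπ := hsub3 ht
      have ht0 : 0 < t := lt_trans hr0 ht.1
      have htγ : (0:ℝ) ≤ t ^ γ := Real.rpow_nonneg ht0.le γ
      have h1 : g t ≤ (π/t)^(2*l) * (t ^ γ * t ^ (a+b)) := by
        rw [hg_def]
        apply mul_le_mul (hD_le_t t htπ)
          (mul_le_mul_of_nonneg_left (hα_le_pow t htπ) htγ)
          (mul_nonneg htγ (halpha_nonneg t htπ)) (by positivity)
      refine le_trans h1 (le_of_eq ?_)
      rw [div_pow, div_mul_eq_mul_div, mul_div_assoc]
      congr 1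
      rw [← Real.rpow_natCast t (a+b), ← Real.rpow_natCast t (2*l),
        ← Real.rpow_add ht0, ← Real.rpow_sub ht0, hs2_def]
    have hIoo2 : IntegrableOn g (Set.Ioo r π) := hg_int.mono_set hsub3
    calc (∫ t in Set.Ioo r π, g t)
        ≤ ∫ t in Set.Ioo r π, π^(2*l) * t ^ s2 :=
          setIntegral_mono_on hIoo2 hmaj2_int measurableSet_Ioo hmono
      _ = π^(2*l) * ∫ t in Set.Ioo r π, t ^ s2 := by
          rw [MeasureTheory.integral_const_mul]
      _ ≤ π^(2*l) * (r ^ (e - 2*(l:ℝ)) / (2*(l:ℝ) - e)) := by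
          apply mul_le_mul_of_nonneg_left _ (by positivity)
          rw [← MeasureTheory.integral_Ioc_eq_integral_Ioo,
            ← intervalIntegral.integral_of_le hrπ.le,
            integral_rpow (Or.inr ⟨by linarith, Set.notMem_uIcc_of_lt hr0 hπ0⟩)]
          rw [hs2e]
          have hππ : (0:ℝ) < π ^ (e - 2*(l:ℝ)) := Real.rpow_pos_of_pos hπ0 _
          have hrr : (0:ℝ) < r ^ (e - 2*(l:ℝ)) := Real.rpow_pos_of_pos hr0 _
          have h2le : (0:ℝ) < 2*(l:ℝ) - e := by linarith
          rw [show (π ^ (e - 2*(l:ℝ)) - r ^ (e - 2*(l:ℝ))) / (e - 2*(l:ℝ))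
              = (r ^ (e - 2*(l:ℝ)) - π ^ (e - 2*(l:ℝ))) / (2*(l:ℝ) - e) by
            rw [div_eq_div_iff (by linarith) (by linarith)]; ring]
          gcongr
          linarith
  -- lower bound for k
  have hminor_int : IntegrableOn (fun t => (2*(μ:ℝ)/π)^(2*l) * (t/π)^(a+b))
      (Set.Ioo (0:ℝ) r) := by
    apply Measure.integrableOn_of_bounded (by rw [Real.volume_Ioo]; exact ENNReal.ofReal_ne_top)
      (by fun_prop :
        Measurable fun t : ℝ => (2*(μ:ℝ)/π)^(2*l) * (t/π)^(a+b)).aestronglyMeasurable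
      (M := (2*(μ:ℝ)/π)^(2*l) * (r/π)^(a+b))
    filter_upwards [ae_restrict_mem measurableSet_Ioo] with t ht
    rw [Real.norm_eq_abs, abs_of_nonneg
      (mul_nonneg (by positivity) (pow_nonneg (div_nonneg ht.1.le hπ0.le) _))]
    apply mul_le_mul_of_nonneg_left _ (by positivity)
    apply pow_le_pow_left₀ (div_nonneg ht.1.le hπ0.le)
    exact div_le_div_of_nonneg_right ht.2.le hπ0.le
  have hk_ge : (2*(μ:ℝ)/π)^(2*l) * (r^(a+b+1) / (((a+b+1:ℕ):ℝ) * π^(a+b))) ≤ k := by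
    have hstep1 : (∫ t in Set.Ioo (0:ℝ) r, (2*(μ:ℝ)/π)^(2*l) * (t/π)^(a+b))
        ≤ ∫ t in Set.Ioo (0:ℝ) r, f t := by
      apply setIntegral_mono_on hminor_int (hf_int.mono_set hsub1) measurableSet_Ioo
      intro t ht
      rw [hf_def]
      exact mul_le_mul (hD_ge t ht) (halpha_ge t ht)
        (pow_nonneg (div_nonneg ht.1.le hπ0.le) _) (hD_nonneg t)
    have hstep2 : (∫ t in Set.Ioo (0:ℝ) r, f t) ≤ k := by
      rw [hk_def]
      apply setIntegral_mono_set hf_int ?_ (HasSubset.Subset.eventuallyLE hsub1)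
      filter_upwards [ae_restrict_mem measurableSet_Ioo] with t ht
      exact mul_nonneg (hD_nonneg t) (halpha_nonneg t ht)
    have hcalc : (∫ t in Set.Ioo (0:ℝ) r, (2*(μ:ℝ)/π)^(2*l) * (t/π)^(a+b))
        = (2*(μ:ℝ)/π)^(2*l) * (r^(a+b+1) / (((a+b+1:ℕ):ℝ) * π^(a+b))) := by
      rw [MeasureTheory.integral_const_mul]
      congr 1
      have hdp : ∀ t : ℝ, (t/π)^(a+b) = t^(a+b) * (π^(a+b))⁻¹ := by
        intro t; rw [div_pow, division_def]
      simp_rw [hdp]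
      rw [MeasureTheory.integral_mul_const, ← MeasureTheory.integral_Ioc_eq_integral_Ioo,
        ← intervalIntegral.integral_of_le hr0.le, integral_pow,
        zero_pow (by omega : a+b+1 ≠ 0)]
      have hab1 : ((a+b+1:ℕ):ℝ) ≠ 0 := by positivity
      have hπab : (π:ℝ)^(a+b) ≠ 0 := by positivity
      field_simp
      push_cast; ring
    linarith
  have hk_pos : 0 < k :=
    lt_of_lt_of_le (by positivity) hk_ge
  -- rpow algebra
  have hI_le : (∫ t in Set.Ioo (0:ℝ) r, g t) + (∫ t in Set.Ico r π, g t)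
      ≤ A * (μ:ℝ) ^ (2*(l:ℝ) - e) := by
    refine le_trans (add_le_add hP1 hP2) (le_of_eq ?_)
    rw [hr_def, ← Real.rpow_natCast (μ:ℝ) (2*l), Real.inv_rpow hx0.le, Real.inv_rpow hx0.le,
      ← Real.rpow_neg hx0.le, ← Real.rpow_neg hx0.le,
      show -(e - 2*(l:ℝ)) = 2*(l:ℝ) - e by ring,
      mul_div_assoc', ← Real.rpow_add hx0,
      show ((2*l:ℕ):ℝ) + -e = 2*(l:ℝ) - e by push_cast; ring, hA_def]
    ring
  have hmulμ : (μ:ℝ)^(2*l) * (((μ:ℝ)^(a+b+1))⁻¹) = (μ:ℝ) ^ (2*(l:ℝ) - ((a+b+1:ℕ):ℝ)) := by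
    rw [← Real.rpow_natCast (μ:ℝ) (2*l), ← Real.rpow_natCast (μ:ℝ) (a+b+1),
      ← Real.rpow_neg hx0.le, ← Real.rpow_add hx0]
    congr 1; push_cast; ring
  have hB_eq : (2*(μ:ℝ)/π)^(2*l) * (r^(a+b+1) / (((a+b+1:ℕ):ℝ) * π^(a+b)))
      = cK * (μ:ℝ) ^ (2*(l:ℝ) - ((a+b+1:ℕ):ℝ)) := by
    calc (2*(μ:ℝ)/π)^(2*l) * (r^(a+b+1) / (((a+b+1:ℕ):ℝ) * π^(a+b)))
        = (2/π)^(2*l) * ((μ:ℝ)^(2*l) * (((μ:ℝ)^(a+b+1))⁻¹)) / (((a+b+1:ℕ):ℝ) * π^(a+b)) := by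
          rw [hr_def, inv_pow, show (2*(μ:ℝ)/π) = 2/π * (μ:ℝ) by ring, mul_pow]
          ring
      _ = cK * (μ:ℝ) ^ (2*(l:ℝ) - ((a+b+1:ℕ):ℝ)) := by
          rw [hmulμ, hcK_def]
          have hab1 : ((a+b+1:ℕ):ℝ) ≠ 0 := by positivity
          field_simp
  have hk_ge' : cK * (μ:ℝ) ^ (2*(l:ℝ) - ((a+b+1:ℕ):ℝ)) ≤ k := hB_eq ▸ hk_ge
  have hX : (0:ℝ) < (μ:ℝ) ^ (2*(l:ℝ) - e) := Real.rpow_pos_of_pos hx0 _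
  have hY : (0:ℝ) < (μ:ℝ) ^ (2*(l:ℝ) - ((a+b+1:ℕ):ℝ)) := Real.rpow_pos_of_pos hx0 _
  rw [hsplit, one_div, inv_mul_eq_div]
  calc ((∫ t in Set.Ioo (0:ℝ) r, g t) + ∫ t in Set.Ico r π, g t) / k
      ≤ (A * (μ:ℝ) ^ (2*(l:ℝ) - e)) / (cK * (μ:ℝ) ^ (2*(l:ℝ) - ((a+b+1:ℕ):ℝ))) :=
        div_le_div₀ (mul_nonneg hA0.le hX.le) hI_le (mul_pos hcK0 hY) hk_ge'
    _ = A / cK / (μ:ℝ) ^ γ := by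
        rw [mul_div_mul_comm, ← Real.rpow_sub hx0,
          show (2*(l:ℝ) - e) - (2*(l:ℝ) - ((a+b+1:ℕ):ℝ)) = -γ by rw [he_def]; push_cast; ring,
          Real.rpow_neg hx0.le, ← div_eq_mul_inv]
end

section
/- Let l be a positive integer. Then for every integer μ ≥ 2 one has k_{μ,l} ≥ (2^{2l+b} / π^{a+b}) · ∫_0^{π/2} t^{a+b-2l} (sin(μ t/2))^{2l} dt. -/
open MeasureTheory Real

/-- With `m = a + b + 1`, `α(t) = sin(t/2)^a (sin t)^b` and
`D_{μ,l}(t) = (sin(μt/2)/sin(t/2))^(2l)`, for every integer `μ ≥ 2` the normalizing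
constant `k_{μ,l} = ∫_0^π D_{μ,l}(t) α(t) dt` satisfies
`k_{μ,l} ≥ (2^(2l+b) / π^(a+b)) · ∫_0^{π/2} t^(a+b-2l) (sin(μt/2))^(2l) dt`. -/
theorem stmt_2 (a b : ℕ) (m : ℕ) (hm : m = a + b + 1) (l : ℕ) (hl : 1 ≤ l) :
    ∀ μ : ℕ, 2 ≤ μ →
      (2 ^ (2 * l + b) / π ^ (a + b)) *
          (∫ t in Set.Ioo (0 : ℝ) (π / 2),
            t ^ ((a : ℤ) + b - 2 * l) * (Real.sin (μ * t / 2)) ^ (2 * l))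
        ≤ ∫ t in Set.Ioo (0 : ℝ) π,
            (Real.sin (μ * t / 2) / Real.sin (t / 2)) ^ (2 * l) *
              ((Real.sin (t / 2)) ^ a * (Real.sin t) ^ b) := by
  intro μ hμ
  have hπ : (0:ℝ) < π := Real.pi_pos
  have hμ0 : (0:ℝ) < (μ:ℝ) := by positivity
  set c : ℝ := 2 ^ (2*l+b) / π ^ (a+b) with hc
  have hc0 : 0 < c := by positivity
  set F : ℝ → ℝ := fun t => (Real.sin (μ*t/2) / Real.sin (t/2)) ^ (2*l) *
      ((Real.sin (t/2)) ^ a * (Real.sin t) ^ b) with hF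
  set G : ℝ → ℝ := fun t => t ^ ((a:ℤ) + b - 2*l) * (Real.sin (μ*t/2)) ^ (2*l) with hG
  -- nonnegativity of F on (0,π)
  have hFnn : ∀ t ∈ Set.Ioo (0:ℝ) π, 0 ≤ F t := by
    intro t ht
    obtain ⟨ht0, htπ⟩ := ht
    have hp0 : 0 < Real.sin (t/2) :=
      Real.sin_pos_of_pos_of_lt_pi (by positivity) (by linarith)
    have hq0 : 0 < Real.sin t := Real.sin_pos_of_pos_of_lt_pi ht0 htπ
    have h1 : 0 ≤ (Real.sin (μ*t/2) / Real.sin (t/2)) ^ (2*l) :=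
      (even_two_mul l).pow_nonneg _
    positivity
  -- measurability
  have hFm : Measurable F := by
    apply Measurable.mul
    · exact ((Real.continuous_sin.comp (by fun_prop)).measurable.div
        ((Real.continuous_sin.comp (by fun_prop)).measurable)).pow_const _
    · exact (((Real.continuous_sin.comp (by fun_prop)).measurable).pow_const _).mul
        ((Real.continuous_sin.measurable).pow_const _)
  -- F bounded on (0,π)
  have hFbd : ∀ t ∈ Set.Ioo (0:ℝ) π, ‖F t‖ ≤ ((μ:ℝ) * π / 2) ^ (2*l) := by
    intro t ht
    obtain ⟨ht0, htπ⟩ := ht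
    have hp0 : 0 < Real.sin (t/2) :=
      Real.sin_pos_of_pos_of_lt_pi (by positivity) (by linarith)
    have hq0 : 0 < Real.sin t := Real.sin_pos_of_pos_of_lt_pi ht0 htπ
    have hp1 : Real.sin (t/2) ≤ 1 := Real.sin_le_one _
    have hq1 : Real.sin t ≤ 1 := Real.sin_le_one _
    have hplb : t / π ≤ Real.sin (t/2) := by
      have h := Real.mul_le_sin (x := t/2) (by positivity) (by linarith)
      calc t / π = 2/π * (t/2) := by ring
        _ ≤ _ := h
    have hs : |Real.sin (μ*t/2)| ≤ (μ:ℝ)*t/2 :=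
      (Real.abs_sin_le_abs (x := μ*t/2)).trans
        (le_of_eq (abs_of_nonneg (by positivity)))
    have hratio : |Real.sin (μ*t/2) / Real.sin (t/2)| ≤ (μ:ℝ) * π / 2 := by
      rw [abs_div, abs_of_pos hp0, div_le_iff₀ hp0]
      calc |Real.sin (μ*t/2)| ≤ (μ:ℝ)*t/2 := hs
        _ = ((μ:ℝ)*π/2) * (t/π) := by field_simp
        _ ≤ ((μ:ℝ)*π/2) * Real.sin (t/2) :=
            mul_le_mul_of_nonneg_left hplb (by positivity)
    rw [Real.norm_eq_abs, abs_of_nonneg (hFnn t ⟨ht0, htπ⟩)]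
    calc F t = |Real.sin (μ*t/2) / Real.sin (t/2)| ^ (2*l) *
          ((Real.sin (t/2)) ^ a * (Real.sin t) ^ b) := by
          rw [hF, (even_two_mul l).pow_abs]
      _ ≤ ((μ:ℝ) * π / 2) ^ (2*l) * 1 := by
          apply mul_le_mul
          · exact pow_le_pow_left₀ (abs_nonneg _) hratio _
          · exact mul_le_one₀ (pow_le_one₀ hp0.le hp1) (by positivity)
              (pow_le_one₀ hq0.le hq1)
          · positivity
          · positivity
      _ = ((μ:ℝ) * π / 2) ^ (2*l) := mul_one _
  -- integrability of F on (0,π)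
  have hFint : IntegrableOn F (Set.Ioo (0:ℝ) π) :=
    Measure.integrableOn_of_bounded (measure_Ioo_lt_top).ne
      hFm.aestronglyMeasurable
      ((ae_restrict_iff' measurableSet_Ioo).2 (Filter.Eventually.of_forall hFbd))
  have hFint1 : IntegrableOn F (Set.Ioo (0:ℝ) (π/2)) :=
    hFint.mono_set (Set.Ioo_subset_Ioo le_rfl (by linarith))
  -- integrability of G on (0,π/2)
  have hGm : AEStronglyMeasurable G (volume.restrict (Set.Ioo (0:ℝ) (π/2))) := by
    apply ContinuousOn.aestronglyMeasurable _ measurableSet_Ioo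
    apply ContinuousOn.mul
    · intro t ht
      exact (continuousAt_zpow₀ _ _ (Or.inl (ne_of_gt ht.1))).continuousWithinAt
    · exact ((Real.continuous_sin.comp (by fun_prop)).pow _).continuousOn
  have hGbd : ∀ t ∈ Set.Ioo (0:ℝ) (π/2), ‖G t‖ ≤ ((μ:ℝ)/2) ^ (2*l) * π ^ (a+b) := by
    intro t ht
    obtain ⟨ht0, ht2⟩ := ht
    have hs : |Real.sin (μ*t/2)| ≤ (μ:ℝ)*t/2 :=
      (Real.abs_sin_le_abs (x := μ*t/2)).trans
        (le_of_eq (abs_of_nonneg (by positivity)))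
    have hz : t ^ ((a:ℤ) + b - 2*l) = t ^ (a+b) * (t ^ (2*l))⁻¹ := by
      rw [show ((a:ℤ) + b - 2*l) = ((a+b : ℕ) : ℤ) - ((2*l : ℕ) : ℤ) by push_cast; ring,
        zpow_sub₀ (ne_of_gt ht0), zpow_natCast, zpow_natCast, div_eq_mul_inv]
    rw [hG, Real.norm_eq_abs, abs_mul, abs_pow, hz]
    have htp : 0 < t ^ (2*l) := by positivity
    calc |t ^ (a+b) * (t ^ (2*l))⁻¹| * |Real.sin (μ*t/2)| ^ (2*l)
        ≤ (t ^ (a+b) * (t ^ (2*l))⁻¹) * ((μ:ℝ)*t/2) ^ (2*l) := by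
          rw [abs_of_nonneg (by positivity)]
          exact mul_le_mul_of_nonneg_left (pow_le_pow_left₀ (abs_nonneg _) hs _)
            (by positivity)
      _ = ((μ:ℝ)/2) ^ (2*l) * t ^ (a+b) := by
          have ht0' : t ≠ 0 := ne_of_gt ht0
          field_simp
          ring
      _ ≤ ((μ:ℝ)/2) ^ (2*l) * π ^ (a+b) := by
          apply mul_le_mul_of_nonneg_left _ (by positivity)
          exact pow_le_pow_left₀ ht0.le (by linarith) _
  have hGint : IntegrableOn G (Set.Ioo (0:ℝ) (π/2)) :=
    ⟨hGm, HasFiniteIntegral.restrict_of_bounded (C := ((μ:ℝ)/2) ^ (2*l) * π ^ (a+b))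
      measure_Ioo_lt_top
      ((ae_restrict_iff' measurableSet_Ioo).2 (Filter.Eventually.of_forall hGbd))⟩
  -- pointwise inequality on (0, π/2)
  have hpt : ∀ t ∈ Set.Ioo (0:ℝ) (π/2), c * G t ≤ F t := by
    intro t ht
    obtain ⟨ht0, ht2⟩ := ht
    have hp0 : 0 < Real.sin (t/2) :=
      Real.sin_pos_of_pos_of_lt_pi (by positivity) (by linarith)
    have hq0 : 0 < Real.sin t := Real.sin_pos_of_pos_of_lt_pi ht0 (by linarith)
    have hplb : t / π ≤ Real.sin (t/2) := by
      have h := Real.mul_le_sin (x := t/2) (by positivity) (by linarith)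
      calc t / π = 2/π * (t/2) := by ring
        _ ≤ _ := h
    have hpub : Real.sin (t/2) ≤ t/2 := Real.sin_le (by positivity)
    have hqlb : 2/π * t ≤ Real.sin t := Real.mul_le_sin ht0.le ht2.le
    have hz : t ^ ((a:ℤ) + b - 2*l) = t ^ (a+b) * (t ^ (2*l))⁻¹ := by
      rw [show ((a:ℤ) + b - 2*l) = ((a+b : ℕ) : ℤ) - ((2*l : ℕ) : ℤ) by push_cast; ring,
        zpow_sub₀ (ne_of_gt ht0), zpow_natCast, zpow_natCast, div_eq_mul_inv]
    have key : c * t ^ ((a:ℤ) + b - 2*l) ≤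
        (Real.sin (t/2)) ^ a * (Real.sin t) ^ b * ((Real.sin (t/2)) ^ (2*l))⁻¹ := by
      have e1 : c * t ^ ((a:ℤ) + b - 2*l)
          = (t/π) ^ a * (2/π * t) ^ b * (((t/2) ^ (2*l))⁻¹) := by
        have ht0' : t ≠ 0 := ne_of_gt ht0
        have hπ' : π ≠ 0 := ne_of_gt hπ
        rw [hz, hc]
        rw [div_pow, mul_pow, div_pow, div_pow, pow_add, pow_add, pow_add]
        field_simp
      rw [e1]
      gcongr ?_ * ?_ * ?_
      · exact pow_le_pow_left₀ (by positivity) hplb _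
      · exact pow_le_pow_left₀ (by positivity) hqlb _
      · rw [inv_le_inv₀ (by positivity) (by positivity)]
        exact pow_le_pow_left₀ hp0.le hpub _
    have hs2 : 0 ≤ (Real.sin (μ*t/2)) ^ (2*l) := (even_two_mul l).pow_nonneg _
    calc c * G t = (Real.sin (μ*t/2)) ^ (2*l) * (c * t ^ ((a:ℤ) + b - 2*l)) := by
          rw [hG]; ring
      _ ≤ (Real.sin (μ*t/2)) ^ (2*l) *
          ((Real.sin (t/2)) ^ a * (Real.sin t) ^ b * ((Real.sin (t/2)) ^ (2*l))⁻¹) :=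
          mul_le_mul_of_nonneg_left key hs2
      _ = F t := by
          simp only [hF, div_pow]
          field_simp
  -- combine
  calc c * ∫ t in Set.Ioo (0:ℝ) (π/2), G t
      = ∫ t in Set.Ioo (0:ℝ) (π/2), c * G t := (integral_const_mul c G).symm
    _ ≤ ∫ t in Set.Ioo (0:ℝ) (π/2), F t :=
        setIntegral_mono_on (hGint.const_mul c) hFint1 measurableSet_Ioo hpt
    _ ≤ ∫ t in Set.Ioo (0:ℝ) π, F t := by
        apply setIntegral_mono_set hFint
        · exact (ae_restrict_iff' measurableSet_Ioo).2 (Filter.Eventually.of_forall hFnn)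
        · exact Filter.Eventually.of_forall (Set.Ioo_subset_Ioo le_rfl (by linarith))
end

section
/- Let a and b be nonnegative integers and let l be a positive integer. Then for every integer μ ≥ 2 one has ∫_0^{π/2} t^{a+b-2l} (sin(μ t/2))^{2l} dt ≥ μ^{2l-a-b-1} · ∫_0^{π} u^{a+b-2l} (sin(u/2))^{2l} du. -/
open MeasureTheory Real

/-- For nonnegative integers `a, b`, a positive integer `l` and
every integer `μ ≥ 2`,
`∫_0^{π/2} t^(a+b-2l) (sin(μt/2))^(2l) dt ≥ μ^(2l-a-b-1) · ∫_0^π u^(a+b-2l) (sin(u/2))^(2l) du`. -/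
theorem stmt_3 (a b : ℕ) (l : ℕ) (hl : 1 ≤ l) :
    ∀ μ : ℕ, 2 ≤ μ →
      (μ : ℝ) ^ ((2 * l : ℤ) - a - b - 1) *
          (∫ u in Set.Ioo (0 : ℝ) π,
            u ^ ((a : ℤ) + b - 2 * l) * (Real.sin (u / 2)) ^ (2 * l))
        ≤ ∫ t in Set.Ioo (0 : ℝ) (π / 2),
            t ^ ((a : ℤ) + b - 2 * l) * (Real.sin (μ * t / 2)) ^ (2 * l) := by
  intro μ hμ
  have hμ0 : (0:ℝ) < μ := by positivity
  have hμne : (μ:ℝ) ≠ 0 := hμ0.ne'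
  set c : ℤ := (a:ℤ) + b - 2 * l with hc
  set g : ℝ → ℝ := fun u => u ^ c * Real.sin (u / 2) ^ (2 * l) with hg
  have hzm : ∀ d : ℤ, Measurable fun x : ℝ => x ^ d := by
    intro d
    obtain ⟨n, rfl | rfl⟩ := d.eq_nat_or_neg
    · simpa [zpow_natCast] using (measurable_id.pow_const n : Measurable fun x : ℝ => x ^ n)
    · simp_rw [zpow_neg, zpow_natCast]
      exact (measurable_id.pow_const n).inv
  have hmeas : Measurable g := by
    apply Measurable.mul
    · exact hzm c
    · exact ((Real.measurable_sin.comp (measurable_id.div_const 2)).pow_const _)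
  have hgnn : ∀ x : ℝ, 0 < x → 0 ≤ g x := by
    intro x hx
    have h1 : (0:ℝ) ≤ x ^ c := zpow_nonneg hx.le _
    have h2 : (0:ℝ) ≤ Real.sin (x / 2) ^ (2 * l) := by
      rw [pow_mul]; positivity
    exact mul_nonneg h1 h2
  have hgbd : ∀ M : ℝ, ∀ x ∈ Set.Ioo (0:ℝ) M, g x ≤ max 1 M ^ (a + b) := by
    intro M x hx
    have hx0 : 0 < x := hx.1
    have hs : Real.sin (x / 2) ^ (2 * l) ≤ x ^ (2 * l) := by
      calc Real.sin (x / 2) ^ (2 * l) ≤ |Real.sin (x / 2)| ^ (2 * l) := by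
            rw [← abs_pow]; exact le_abs_self _
        _ ≤ x ^ (2 * l) := by
            apply pow_le_pow_left₀ (abs_nonneg _)
            calc |Real.sin (x / 2)| ≤ |x / 2| := Real.abs_sin_le_abs
              _ = x / 2 := abs_of_pos (by linarith)
              _ ≤ x := by linarith
    have key : x ^ c * x ^ (2 * l) = x ^ (a + b) := by
      rw [← zpow_natCast x (2 * l), ← zpow_add₀ hx0.ne', ← zpow_natCast x (a + b)]
      congr 1
      push_cast [hc]; ring
    calc g x ≤ x ^ c * x ^ (2 * l) :=
          mul_le_mul_of_nonneg_left hs (zpow_nonneg hx0.le _)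
      _ = x ^ (a + b) := key
      _ ≤ max 1 M ^ (a + b) := by
          apply pow_le_pow_left₀ hx0.le
          exact le_trans hx.2.le (le_max_right 1 M)
  have hint : ∀ M : ℝ, IntegrableOn g (Set.Ioo 0 M) := by
    intro M
    apply Measure.integrableOn_of_bounded (M := max 1 M ^ (a + b))
    · exact (measure_Ioo_lt_top).ne
    · exact hmeas.aestronglyMeasurable
    · filter_upwards [ae_restrict_mem measurableSet_Ioo] with x hx
      rw [Real.norm_eq_abs, abs_of_nonneg (hgnn x hx.1)]
      exact hgbd M x hx
  -- change of variables on the RHS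
  have hrhs :
      (∫ t in Set.Ioo (0 : ℝ) (π / 2),
          t ^ c * (Real.sin (μ * t / 2)) ^ (2 * l))
        = (μ:ℝ) ^ (-c) * ((μ:ℝ)⁻¹ * ∫ u in Set.Ioo (0:ℝ) (μ * (π / 2)), g u) := by
    have heq : ∀ t : ℝ,
        t ^ c * (Real.sin (μ * t / 2)) ^ (2 * l) = (μ:ℝ) ^ (-c) * g (μ * t) := by
      intro t
      simp only [hg, mul_zpow]
      rw [zpow_neg]
      field_simp
    simp_rw [heq]
    rw [integral_const_mul]
    congr 1
    have h1 : (∫ t in Set.Ioo (0:ℝ) (π / 2), g (μ * t))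
        = ∫ t in (0:ℝ)..(π / 2), g (μ * t) := by
      rw [intervalIntegral.integral_of_le (by positivity), integral_Ioc_eq_integral_Ioo]
    have h2 : (∫ u in Set.Ioo (0:ℝ) (μ * (π / 2)), g u)
        = ∫ u in (0:ℝ)..(μ * (π / 2)), g u := by
      rw [intervalIntegral.integral_of_le (by positivity), integral_Ioc_eq_integral_Ioo]
    rw [h1, h2, intervalIntegral.integral_comp_mul_left g hμne, mul_zero, smul_eq_mul]
  have hmono : (∫ u in Set.Ioo (0:ℝ) π, g u)
      ≤ ∫ u in Set.Ioo (0:ℝ) (μ * (π / 2)), g u := by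
    apply setIntegral_mono_set (hint _)
    · filter_upwards [ae_restrict_mem measurableSet_Ioo] with x hx using hgnn x hx.1
    · apply HasSubset.Subset.eventuallyLE
      apply Set.Ioo_subset_Ioo_right
      have : (2:ℝ) * (π / 2) ≤ μ * (π / 2) := by
        apply mul_le_mul_of_nonneg_right _ (by positivity)
        exact_mod_cast hμ
      linarith
  have hexp : ((2 * l : ℤ) - a - b - 1) = -c - 1 := by rw [hc]; ring
  rw [hexp, hrhs]
  rw [zpow_sub₀ hμne, zpow_one, ← mul_assoc, div_eq_mul_inv]
  exact mul_le_mul_of_nonneg_left hmono (by positivity)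
end

section
/- Let γ > 0 and let l be a positive integer with 2l > γ + m. Then for every integer μ ≥ 2 one has ∫_0^π D_{μ,l}(t) t^γ α(t) dt ≤ (π^{2l} / 2^a) · (2/μ)^{γ+m-2l} · (1/(γ+m) + 1/(2l-(γ+m))). -/
open MeasureTheory Real

lemma my_abs_sin_nat_mul_le (n : ℕ) (x : ℝ) (hx : 0 ≤ Real.sin x) :
    |Real.sin (n * x)| ≤ n * Real.sin x := by
  induction n with
  | zero => simp
  | succ n ih =>
    have h1 : ((n : ℝ) + 1) * x = n * x + x := by ring
    push_cast
    rw [h1, Real.sin_add]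
    calc |Real.sin (n*x) * Real.cos x + Real.cos (n*x) * Real.sin x|
        ≤ |Real.sin (n*x) * Real.cos x| + |Real.cos (n*x) * Real.sin x| := abs_add_le _ _
      _ ≤ |Real.sin (n*x)| * 1 + 1 * |Real.sin x| := by
          rw [abs_mul, abs_mul]
          gcongr <;> first | exact Real.abs_cos_le_one _ | exact le_refl _
      _ ≤ n * Real.sin x + Real.sin x := by
          rw [abs_of_nonneg hx]; simpa using add_le_add_right ih (Real.sin x)
      _ = (n + 1) * Real.sin x := by ring

/-- With `m = a + b + 1`, `α(t) = sin(t/2)^a (sin t)^b` and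
`D_{μ,l}(t) = (sin(μt/2)/sin(t/2))^(2l)`, for `γ > 0`, `l ≥ 1` with `2l > γ + m`
and every integer `μ ≥ 2`,
`∫_0^π D_{μ,l}(t) t^γ α(t) dt ≤ (π^(2l)/2^a) (2/μ)^(γ+m-2l) (1/(γ+m) + 1/(2l-(γ+m)))`. -/
theorem stmt_8 (a b : ℕ) (m : ℕ) (hm : m = a + b + 1)
    (γ : ℝ) (hγ : 0 < γ) (l : ℕ) (hl : 1 ≤ l)
    (h2l : γ + (m : ℝ) < 2 * l) :
    ∀ μ : ℕ, 2 ≤ μ →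
      (∫ t in Set.Ioo (0 : ℝ) π,
          (Real.sin (μ * t / 2) / Real.sin (t / 2)) ^ (2 * l) *
            (t ^ γ * ((Real.sin (t / 2)) ^ a * (Real.sin t) ^ b)))
        ≤ (π ^ (2 * l) / 2 ^ a) * (2 / (μ : ℝ)) ^ (γ + m - 2 * l) *
            (1 / (γ + m) + 1 / (2 * l - (γ + m))) := by
  intro μ hμ
  have hμR : (2 : ℝ) ≤ (μ : ℝ) := by exact_mod_cast hμ
  have hμ0 : (0 : ℝ) < μ := by linarith
  set c : ℝ := 2 / (μ : ℝ) with hc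
  have hc0 : 0 < c := by positivity
  have hc1 : c ≤ 1 := by rw [hc, div_le_one hμ0]; linarith
  have hcπ : c < π := lt_of_le_of_lt hc1 (by linarith [Real.pi_gt_three])
  set f : ℝ → ℝ := fun t =>
    (Real.sin (μ * t / 2) / Real.sin (t / 2)) ^ (2 * l) *
      (t ^ γ * ((Real.sin (t / 2)) ^ a * (Real.sin t) ^ b)) with hf
  set p : ℝ := γ + m - 1 with hp
  set q : ℝ := p - 2 * l with hq
  have hmR : (1 : ℝ) ≤ (m : ℝ) := by exact_mod_cast Nat.one_le_iff_ne_zero.mpr (by omega)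
  have hlR : (1 : ℝ) ≤ (l : ℝ) := by exact_mod_cast hl
  have hp0 : 0 < p := by rw [hp]; linarith
  have hp1 : p + 1 = γ + m := by rw [hp]; ring
  have hq1 : q + 1 = γ + m - 2 * l := by rw [hq, hp]; ring
  have hq1neg : q + 1 < 0 := by rw [hq1]; linarith
  have hsin_half_pos : ∀ t : ℝ, 0 < t → t ≤ π → 0 < Real.sin (t / 2) := by
    intro t ht ht'
    exact Real.sin_pos_of_pos_of_lt_pi (by linarith) (by linarith [Real.pi_pos])
  -- key bound 1 : on (0, c], f t ≤ (μ^(2l)/2^a) * t ^ p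
  have key1 : ∀ t ∈ Set.Ioc (0:ℝ) c, f t ≤ ((μ:ℝ) ^ (2*l) / 2 ^ a) * t ^ p := by
    intro t ht
    obtain ⟨ht0, htc⟩ := ht
    have htπ : t ≤ π := le_of_lt (lt_of_le_of_lt htc hcπ)
    have hs : 0 < Real.sin (t / 2) := hsin_half_pos t ht0 htπ
    have hsle : Real.sin (t/2) ≤ t/2 := Real.sin_le (by linarith)
    have hsinle : Real.sin t ≤ t := Real.sin_le ht0.le
    have hsin0 : 0 ≤ Real.sin t := Real.sin_nonneg_of_nonneg_of_le_pi ht0.le htπ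
    have hratio : |Real.sin (μ * t / 2) / Real.sin (t / 2)| ≤ (μ : ℝ) := by
      rw [abs_div, abs_of_pos hs, div_le_iff₀ hs]
      have h2 : (μ:ℝ) * t / 2 = μ * (t/2) := by ring
      rw [h2]
      exact my_abs_sin_nat_mul_le μ (t/2) hs.le
    have hpow : (Real.sin (μ * t / 2) / Real.sin (t / 2)) ^ (2*l) ≤ (μ:ℝ) ^ (2*l) := by
      calc (Real.sin (μ * t / 2) / Real.sin (t / 2)) ^ (2*l)
          = |Real.sin (μ * t / 2) / Real.sin (t / 2)| ^ (2*l) :=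
            ((even_two_mul l).pow_abs _).symm
        _ ≤ (μ:ℝ) ^ (2*l) := pow_le_pow_left₀ (abs_nonneg _) hratio _
    have hwnonneg : 0 ≤ t ^ γ * ((Real.sin (t / 2)) ^ a * (Real.sin t) ^ b) := by
      have h3 := Real.rpow_nonneg ht0.le γ
      positivity
    have hweight : t ^ γ * ((Real.sin (t / 2)) ^ a * (Real.sin t) ^ b)
        ≤ t ^ γ * ((t/2) ^ a * t ^ b) := by
      have h1 : (Real.sin (t/2)) ^ a ≤ (t/2) ^ a := pow_le_pow_left₀ hs.le hsle a
      have h2 : (Real.sin t) ^ b ≤ t ^ b := pow_le_pow_left₀ hsin0 hsinle b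
      have ht0' : (0:ℝ) ≤ t ^ γ := Real.rpow_nonneg ht0.le γ
      gcongr
    have step : f t ≤ (μ:ℝ) ^ (2*l) * (t ^ γ * ((t/2) ^ a * t ^ b)) := by
      calc f t ≤ (μ:ℝ) ^ (2*l) * (t ^ γ * ((Real.sin (t / 2)) ^ a * (Real.sin t) ^ b)) :=
            mul_le_mul_of_nonneg_right hpow hwnonneg
        _ ≤ (μ:ℝ) ^ (2*l) * (t ^ γ * ((t/2) ^ a * t ^ b)) := by
            have h4 : (0:ℝ) ≤ (μ:ℝ) ^ (2*l) := by positivity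
            exact mul_le_mul_of_nonneg_left hweight h4
    have hrw : t ^ p = t ^ γ * t ^ (a+b) := by
      rw [← Real.rpow_natCast t (a+b), ← Real.rpow_add ht0]
      congr 1
      rw [hp, hm]; push_cast; ring
    calc f t ≤ (μ:ℝ) ^ (2*l) * (t ^ γ * ((t/2) ^ a * t ^ b)) := step
      _ = ((μ:ℝ) ^ (2*l) / 2 ^ a) * t ^ p := by
          rw [hrw, div_pow, pow_add]; ring
  -- key bound 2 : on [c, π], f t ≤ (π^(2l)/2^a) * t ^ q
  have key2 : ∀ t ∈ Set.Icc c π, f t ≤ (π ^ (2*l) / 2 ^ a) * t ^ q := by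
    intro t ht
    obtain ⟨htc, htπ⟩ := ht
    have ht0 : 0 < t := lt_of_lt_of_le hc0 htc
    have hs : 0 < Real.sin (t / 2) := hsin_half_pos t ht0 htπ
    have hslb : t / π ≤ Real.sin (t/2) := by
      have h5 := Real.mul_le_sin (x := t/2) (by linarith) (by linarith)
      have hπ0 := Real.pi_pos
      calc t / π = 2 / π * (t/2) := by field_simp
        _ ≤ Real.sin (t/2) := h5
    have hsle : Real.sin (t/2) ≤ t/2 := Real.sin_le (by linarith)
    have hsinle : Real.sin t ≤ t := Real.sin_le ht0.le
    have hsin0 : 0 ≤ Real.sin t := Real.sin_nonneg_of_nonneg_of_le_pi ht0.le htπ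
    have hratio : |Real.sin (μ * t / 2) / Real.sin (t / 2)| ≤ π / t := by
      rw [abs_div, abs_of_pos hs, div_le_div_iff₀ hs ht0]
      have habs : |Real.sin ((μ:ℝ) * t / 2)| ≤ 1 :=
        abs_le.mpr ⟨Real.neg_one_le_sin _, Real.sin_le_one _⟩
      calc |Real.sin ((μ:ℝ) * t / 2)| * t ≤ 1 * t :=
            mul_le_mul_of_nonneg_right habs ht0.le
        _ = t := one_mul t
        _ ≤ π * Real.sin (t/2) := by
            calc t = π * (t / π) := by field_simp
              _ ≤ π * Real.sin (t/2) := mul_le_mul_of_nonneg_left hslb Real.pi_pos.le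
    have hpow : (Real.sin (μ * t / 2) / Real.sin (t / 2)) ^ (2*l) ≤ (π/t) ^ (2*l) := by
      calc (Real.sin (μ * t / 2) / Real.sin (t / 2)) ^ (2*l)
          = |Real.sin (μ * t / 2) / Real.sin (t / 2)| ^ (2*l) :=
            ((even_two_mul l).pow_abs _).symm
        _ ≤ (π/t) ^ (2*l) := pow_le_pow_left₀ (abs_nonneg _) hratio _
    have hwnonneg : 0 ≤ t ^ γ * ((Real.sin (t / 2)) ^ a * (Real.sin t) ^ b) := by
      have h3 := Real.rpow_nonneg ht0.le γ
      positivity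
    have hweight : t ^ γ * ((Real.sin (t / 2)) ^ a * (Real.sin t) ^ b)
        ≤ t ^ γ * ((t/2) ^ a * t ^ b) := by
      have h1 : (Real.sin (t/2)) ^ a ≤ (t/2) ^ a := pow_le_pow_left₀ hs.le hsle a
      have h2 : (Real.sin t) ^ b ≤ t ^ b := pow_le_pow_left₀ hsin0 hsinle b
      have ht0' : (0:ℝ) ≤ t ^ γ := Real.rpow_nonneg ht0.le γ
      gcongr
    have step : f t ≤ (π/t) ^ (2*l) * (t ^ γ * ((t/2) ^ a * t ^ b)) := by
      calc f t ≤ (π/t) ^ (2*l) * (t ^ γ * ((Real.sin (t / 2)) ^ a * (Real.sin t) ^ b)) :=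
            mul_le_mul_of_nonneg_right hpow hwnonneg
        _ ≤ (π/t) ^ (2*l) * (t ^ γ * ((t/2) ^ a * t ^ b)) := by
            have h4 : (0:ℝ) ≤ (π/t) ^ (2*l) := by positivity
            exact mul_le_mul_of_nonneg_left hweight h4
    have hrw : t ^ q = t ^ γ * t ^ (a+b) / t ^ (2*l) := by
      rw [← Real.rpow_natCast t (a+b), ← Real.rpow_natCast t (2*l),
        ← Real.rpow_add ht0, ← Real.rpow_sub ht0]
      congr 1
      rw [hq, hp, hm]; push_cast; ring
    have htne : (t:ℝ) ^ (2*l) ≠ 0 := by positivity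
    calc f t ≤ (π/t) ^ (2*l) * (t ^ γ * ((t/2) ^ a * t ^ b)) := step
      _ = (π ^ (2*l) / 2 ^ a) * t ^ q := by
          rw [hrw, div_pow, div_pow, pow_add]
          field_simp
  -- measurability and integrability
  have hmeas : Measurable f := by
    apply Measurable.mul
    · fun_prop
    · apply Measurable.mul
      · exact (Real.continuous_rpow_const hγ.le).measurable
      · fun_prop
  have hI1 : IntervalIntegrable f volume 0 c := by
    rw [intervalIntegrable_iff_integrableOn_Ioc_of_le hc0.le]
    apply Measure.integrableOn_of_bounded (M := (μ:ℝ) ^ (2*l) / 2 ^ a * c ^ p)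
    · exact measure_Ioc_lt_top.ne
    · exact hmeas.aestronglyMeasurable
    · filter_upwards [ae_restrict_mem measurableSet_Ioc] with t ht
      have h1 := key1 t ht
      have htπ : t ≤ π := le_of_lt (lt_of_le_of_lt ht.2 hcπ)
      have hs : 0 < Real.sin (t / 2) := hsin_half_pos t ht.1 htπ
      have hsin0 : 0 ≤ Real.sin t := Real.sin_nonneg_of_nonneg_of_le_pi ht.1.le htπ
      have hfn : 0 ≤ f t := by
        apply mul_nonneg ((even_two_mul l).pow_nonneg _)
        exact mul_nonneg (Real.rpow_nonneg ht.1.le γ)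
          (mul_nonneg (pow_nonneg hs.le a) (pow_nonneg hsin0 b))
      rw [Real.norm_eq_abs, abs_of_nonneg hfn]
      calc f t ≤ (μ:ℝ) ^ (2*l) / 2 ^ a * t ^ p := h1
        _ ≤ (μ:ℝ) ^ (2*l) / 2 ^ a * c ^ p := by
            have h6 : t ^ p ≤ c ^ p := Real.rpow_le_rpow ht.1.le ht.2 hp0.le
            have h7 : (0:ℝ) ≤ (μ:ℝ) ^ (2*l) / 2 ^ a := by positivity
            exact mul_le_mul_of_nonneg_left h6 h7
  have hI2 : IntervalIntegrable f volume c π := by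
    apply ContinuousOn.intervalIntegrable
    rw [Set.uIcc_of_le hcπ.le]
    have h0 : ∀ t ∈ Set.Icc c π, Real.sin (t/2) ≠ 0 := fun t ht =>
      (hsin_half_pos t (lt_of_lt_of_le hc0 ht.1) ht.2).ne'
    apply ContinuousOn.mul
    · exact (((by fun_prop : Continuous fun t : ℝ => Real.sin (μ * t / 2)).continuousOn.div
        ((by fun_prop : Continuous fun t : ℝ => Real.sin (t / 2)).continuousOn) h0).pow _)
    · apply ContinuousOn.mul
      · exact ContinuousOn.rpow_const continuousOn_id
          (fun t ht => Or.inl (ne_of_gt (lt_of_lt_of_le hc0 ht.1)))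
      · fun_prop
  have hsplit : (∫ t in Set.Ioo (0:ℝ) π, f t)
      = (∫ t in (0:ℝ)..c, f t) + ∫ t in c..π, f t := by
    rw [intervalIntegral.integral_add_adjacent_intervals hI1 hI2,
      intervalIntegral.integral_of_le Real.pi_pos.le,
      MeasureTheory.integral_Ioc_eq_integral_Ioo]
  -- bound on first piece
  have hpc : Continuous (fun t : ℝ => t ^ p) := Real.continuous_rpow_const hp0.le
  have hb1 : (∫ t in (0:ℝ)..c, f t) ≤ ((μ:ℝ) ^ (2*l) / 2 ^ a) * (c ^ (p+1) / (p+1)) := by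
    have hg1 : IntervalIntegrable (fun t : ℝ => ((μ:ℝ) ^ (2*l) / 2 ^ a) * t ^ p) volume 0 c :=
      ((continuous_const.mul hpc).intervalIntegrable _ _)
    have hptw : ∀ t ∈ Set.Icc (0:ℝ) c, f t ≤ ((μ:ℝ) ^ (2*l) / 2 ^ a) * t ^ p := by
      intro t ht
      rcases eq_or_lt_of_le ht.1 with h0 | h0
      · rw [← h0]
        simp [hf, Real.zero_rpow hp0.ne', zero_pow (by omega : 2*l ≠ 0)]
      · exact key1 t ⟨h0, ht.2⟩
    have hmono := intervalIntegral.integral_mono_on hc0.le hI1 hg1 hptw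
    refine hmono.trans_eq ?_
    rw [intervalIntegral.integral_const_mul,
      integral_rpow (Or.inl (by linarith : (-1:ℝ) < p)),
      Real.zero_rpow (by linarith : p + 1 ≠ 0)]
    ring
  -- bound on second piece
  have hb2 : (∫ t in c..π, f t)
      ≤ (π ^ (2*l) / 2 ^ a) * (c ^ (q+1) / (2 * l - (γ + m))) := by
    have hg2 : IntervalIntegrable (fun t : ℝ => (π ^ (2*l) / 2 ^ a) * t ^ q) volume c π := by
      apply ContinuousOn.intervalIntegrable
      rw [Set.uIcc_of_le hcπ.le]
      exact continuousOn_const.mul (ContinuousOn.rpow_const continuousOn_id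
        (fun t ht => Or.inl (ne_of_gt (lt_of_lt_of_le hc0 ht.1))))
    have hmono := intervalIntegral.integral_mono_on hcπ.le hI2 hg2 key2
    refine hmono.trans ?_
    have h0notin : (0:ℝ) ∉ Set.uIcc c π := by
      rw [Set.uIcc_of_le hcπ.le]
      simp only [Set.mem_Icc, not_and_or, not_le]
      exact Or.inl hc0
    rw [intervalIntegral.integral_const_mul,
      integral_rpow (Or.inr ⟨by linarith, h0notin⟩)]
    have hA : 0 < π ^ (q+1) := Real.rpow_pos_of_pos Real.pi_pos _
    have hB : 0 < c ^ (q+1) := Real.rpow_pos_of_pos hc0 _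
    have hK : (0:ℝ) ≤ π ^ (2*l) / 2 ^ a := by positivity
    apply mul_le_mul_of_nonneg_left ?_ hK
    have he : 2 * (l:ℝ) - (γ + m) = -(q+1) := by rw [hq1]; ring
    rw [he, div_neg]
    have hring : (π ^ (q+1) - c ^ (q+1)) / (q+1) + c ^ (q+1) / (q+1) = π ^ (q+1) / (q+1) := by
      ring
    have hnp : π ^ (q+1) / (q+1) ≤ 0 :=
      div_nonpos_of_nonneg_of_nonpos hA.le hq1neg.le
    linarith
  -- combine
  have e1 : ((μ:ℝ) ^ (2*l) / 2 ^ a) * (c ^ (p+1) / (p+1))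
      ≤ (π ^ (2*l) / 2 ^ a) * c ^ (γ + m - 2*l) * (1/(γ+m)) := by
    rw [hp1]
    have hsplitc : c ^ (γ+(m:ℝ)) = c ^ (γ + m - 2*l) * c ^ (((2*l:ℕ)):ℝ) := by
      rw [← Real.rpow_add hc0]; congr 1; push_cast; ring
    have hcnat : c ^ (((2*l:ℕ)):ℝ) = c ^ (2*l) := Real.rpow_natCast c (2*l)
    have hmu : (μ:ℝ) ^ (2*l) * c ^ (2*l) = 2 ^ (2*l) := by
      rw [← mul_pow, hc, mul_div_cancel₀ _ (ne_of_gt hμ0)]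
    have heq : ((μ:ℝ) ^ (2*l) / 2 ^ a) * (c ^ (γ+(m:ℝ)) / (γ+m))
        = ((μ:ℝ) ^ (2*l) * c ^ (2*l)) / 2 ^ a * c ^ (γ + m - 2*l) * (1/(γ+m)) := by
      rw [hsplitc, hcnat]; ring
    rw [heq, hmu]
    have h2π : (2:ℝ) ^ (2*l) ≤ π ^ (2*l) :=
      pow_le_pow_left₀ (by norm_num) (by linarith [Real.pi_gt_three]) _
    have hce : (0:ℝ) < c ^ (γ + m - 2*l) := Real.rpow_pos_of_pos hc0 _
    have hγm : (0:ℝ) < γ + m := by linarith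
    have h2a : (0:ℝ) < (2:ℝ) ^ a := by positivity
    gcongr
  have e2 : (π ^ (2*l) / 2 ^ a) * (c ^ (q+1) / (2 * l - (γ + m)))
      = (π ^ (2*l) / 2 ^ a) * c ^ (γ + m - 2*l) * (1/(2 * l - (γ + m))) := by
    rw [hq1]; ring
  have final : (π ^ (2*l) / 2 ^ a) * c ^ (γ + m - 2*l) * (1/(γ+m) + 1/(2 * l - (γ + m)))
      = (π ^ (2*l) / 2 ^ a) * c ^ (γ + m - 2*l) * (1/(γ+m))
        + (π ^ (2*l) / 2 ^ a) * c ^ (γ + m - 2*l) * (1/(2 * l - (γ + m))) := by ring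
  rw [hsplit, final]
  exact add_le_add (hb1.trans e1) (hb2.trans (le_of_eq e2))
end
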